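/- Let p : [0,1]² → ℝ² be continuous, differentiable with continuous second mixed partial derivatives on (0,1)², such that: (a) for every rational r ∈ [0,1] and every subinterval [a,b] ⊆ [0,1], the restriction of p to the vertical segment {r} × [a,b] and to the horizontal segment [a,b] × {r} preserves arc length; (b) the partial derivative vectors ∂p/∂x and ∂p/∂y are nowhere collinear on (0,1)². Then p has laminar form: there exist maps α₁, α₂ : [0,1] → ℝ² with p(x,y) = α₁(x) + α₂(y) for all (x,y). -/

import Mathlib

open Set Filter Topology


private lemma sq01_open : IsOpen (Ioo (0:ℝ) 1 ×ˢ Ioo (0:ℝ) 1) := isOpen_Ioo.prod isOpen_Ioo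

/-- Vertical derivative has norm 1 on the open square. -/
private lemma vert_norm_one (p : ℝ × ℝ → EuclideanSpace ℝ (Fin 2))
    (hsmooth : ContDiffOn ℝ 2 p (Ioo 0 1 ×ˢ Ioo 0 1))
    (hvert : ∀ r : ℚ, (r : ℝ) ∈ Icc (0:ℝ) 1 → ∀ a b : ℝ, 0 ≤ a → a ≤ b → b ≤ 1 →
      eVariationOn (fun y : ℝ => p ((r : ℝ), y)) (Icc a b) = ENNReal.ofReal (b - a)) :
    ∀ z ∈ Ioo (0:ℝ) 1 ×ˢ Ioo (0:ℝ) 1, ‖fderiv ℝ p z (0, 1)‖ = 1 := by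
  set S := Ioo (0:ℝ) 1 ×ˢ Ioo (0:ℝ) 1 with hSdef
  have hS : IsOpen S := sq01_open
  -- the function z ↦ ‖fderiv p z (0,1)‖ is continuous on S
  have hdfc : ContinuousOn (fun z => ‖fderiv ℝ p z ((0:ℝ), (1:ℝ))‖) S := by
    have h1 : ContinuousOn (fderiv ℝ p) S :=
      hsmooth.continuousOn_fderiv_of_isOpen hS (by norm_num)
    exact ((ContinuousLinearMap.apply ℝ (EuclideanSpace ℝ (Fin 2))
      (((0:ℝ), (1:ℝ)))).continuous.comp_continuousOn h1).norm
  -- derivative of vertical curves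
  have hder : ∀ z ∈ S, HasDerivAt (fun t => p (z.1, t)) (fderiv ℝ p z (0, 1)) z.2 := by
    rintro ⟨x, y⟩ hz
    have hp : HasFDerivAt p (fderiv ℝ p (x, y)) (x, y) :=
      ((hsmooth.contDiffAt (hS.mem_nhds hz)).differentiableAt (by norm_num)).hasFDerivAt
    have hline : HasDerivAt (fun t : ℝ => ((x : ℝ), t)) (((0:ℝ), (1:ℝ))) y :=
      (hasDerivAt_const y x).prodMk (hasDerivAt_id y)
    exact hp.comp_hasDerivAt y hline
  -- Step A: Lipschitz along rational vertical lines
  have hlip : ∀ r : ℚ, (r : ℝ) ∈ Icc (0:ℝ) 1 →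
      LipschitzOnWith 1 (fun y : ℝ => p ((r : ℝ), y)) (Icc 0 1) := by
    intro r hr
    rw [lipschitzOnWith_iff_dist_le_mul]
    intro a ha b hb
    simp only [NNReal.coe_one, one_mul, Real.dist_eq]
    rcases le_total a b with hab | hba
    · have := eVariationOn.edist_le (fun y : ℝ => p ((r : ℝ), y)) (s := Icc a b) (x := a) (y := b)
        (⟨le_refl a, hab⟩ : a ∈ Icc a b) (⟨hab, le_refl b⟩ : b ∈ Icc a b)
      rw [hvert r hr a b ha.1 hab hb.2, edist_dist] at this
      have h2 := (ENNReal.ofReal_le_ofReal_iff (by linarith)).1 this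
      rw [abs_of_nonpos (by linarith)]; simpa using h2
    · have := eVariationOn.edist_le (fun y : ℝ => p ((r : ℝ), y)) (s := Icc b a) (x := b) (y := a)
        (⟨le_refl b, hba⟩ : b ∈ Icc b a) (⟨hba, le_refl a⟩ : a ∈ Icc b a)
      rw [hvert r hr b a hb.1 hba ha.2, edist_dist] at this
      have h2 := (ENNReal.ofReal_le_ofReal_iff (by linarith)).1 this
      rw [abs_of_nonneg (by linarith), dist_comm]; simpa using h2
  -- Step B: norm 1 along rational vertical lines
  have hratB : ∀ r : ℚ, (r : ℝ) ∈ Ioo (0:ℝ) 1 → ∀ y ∈ Ioo (0:ℝ) 1,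
      ‖fderiv ℝ p ((r : ℝ), y) (0, 1)‖ = 1 := by
    intro r hr y hy
    have hz : ((r : ℝ), y) ∈ S := ⟨hr, hy⟩
    have hd := hder _ hz
    have hle : ‖fderiv ℝ p ((r : ℝ), y) (0, 1)‖ ≤ 1 := by
      have h1 : Icc (0:ℝ) 1 ∈ 𝓝 y := Icc_mem_nhds hy.1 hy.2
      have := hd.hasFDerivAt.le_of_lipschitzOn h1 (hlip r (Ioo_subset_Icc_self hr))
      simpa using this
    by_contra hne
    have hlt : ‖fderiv ℝ p ((r : ℝ), y) (0, 1)‖ < 1 := lt_of_le_of_ne hle hne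
    set n : ℝ := ‖fderiv ℝ p ((r : ℝ), y) (0, 1)‖ with hn
    set K : ℝ := (n + 1) / 2 with hK
    have hK0 : 0 ≤ K := by positivity
    have hnK : n < K := by simp only [hK]; linarith
    have hK1 : K < 1 := by simp only [hK]; linarith
    have hcont' : ContinuousAt (fun t : ℝ => ‖fderiv ℝ p ((r : ℝ), t) (0, 1)‖) y := by
      have h0 : ContinuousAt (fun z => ‖fderiv ℝ p z ((0:ℝ), (1:ℝ))‖) ((r : ℝ), y) :=
        hdfc.continuousAt (hS.mem_nhds hz)
      exact h0.comp ((continuous_const.prodMk continuous_id).continuousAt)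
    have hev : ∀ᶠ t in 𝓝 y, ‖fderiv ℝ p ((r : ℝ), t) (0, 1)‖ < K ∧ t ∈ Ioo (0:ℝ) 1 :=
      (hcont'.tendsto.eventually_lt_const hnK).and
        (eventually_mem_set.mpr (Ioo_mem_nhds hy.1 hy.2))
    rw [Metric.eventually_nhds_iff] at hev
    obtain ⟨ε, hε, hball⟩ := hev
    set δ : ℝ := ε / 2 with hδ
    have hδ0 : 0 < δ := by positivity
    set c : ℝ := y - δ with hc
    set d : ℝ := y + δ with hd2
    have hcd : c < d := by simp only [hc, hd2]; linarith
    have hsub : ∀ t ∈ Icc c d, ‖fderiv ℝ p ((r : ℝ), t) (0, 1)‖ < K ∧ t ∈ Ioo (0:ℝ) 1 := by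
      intro t ht
      apply hball
      rw [Real.dist_eq, abs_sub_lt_iff]
      constructor <;> [skip; skip] <;>
        · simp only [hc, hd2] at ht; rcases ht with ⟨h1, h2⟩; simp only [hδ] at *; linarith
    have hlipK : LipschitzOnWith K.toNNReal (fun t => p ((r : ℝ), t)) (Icc c d) := by
      apply (convex_Icc c d).lipschitzOnWith_of_nnnorm_hasDerivWithin_le
        (f' := fun t => fderiv ℝ p ((r : ℝ), t) (0, 1))
        (fun t ht => (hder ((r:ℝ), t) ⟨hr, (hsub t ht).2⟩).hasDerivWithinAt)
      intro t ht
      have := (hsub t ht).1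
      rw [← NNReal.coe_le_coe, coe_nnnorm, Real.coe_toNNReal _ hK0]
      exact le_of_lt this
    have hid : eVariationOn (fun t : ℝ => t) (Icc c d) ≤ ENNReal.ofReal (d - c) := by
      have := (monotoneOn_id (s := Icc c d)).eVariationOn_le (a := c) (b := d)
        ⟨le_refl c, le_of_lt hcd⟩ ⟨le_of_lt hcd, le_refl d⟩
      rw [inter_self] at this; exact this
    have hvarle : eVariationOn (fun t => p ((r : ℝ), t)) (Icc c d) ≤
        ENNReal.ofReal K * ENNReal.ofReal (d - c) := by
      have h1 := hlipK.comp_eVariationOn_le (g := fun t : ℝ => t) (s := Icc c d)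
        (mapsTo_id _)
      refine le_trans (le_of_eq ?_) (le_trans h1 ?_)
      · rfl
      · refine mul_le_mul' (le_of_eq ?_) hid
        rfl
    have hc0 : 0 ≤ c := le_of_lt ((hsub c ⟨le_refl c, le_of_lt hcd⟩).2).1
    have hd1 : d ≤ 1 := le_of_lt ((hsub d ⟨le_of_lt hcd, le_refl d⟩).2).2
    have heq := hvert r (Ioo_subset_Icc_self hr) c d hc0 (le_of_lt hcd) hd1
    rw [heq, ← ENNReal.ofReal_mul hK0] at hvarle
    have hfin := (ENNReal.ofReal_le_ofReal_iff (by nlinarith)).1 hvarle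
    nlinarith [hfin, hcd]
  -- Step C: extend to all x by density of rationals
  rintro ⟨x, y⟩ hz
  obtain ⟨hx, hy⟩ := hz
  have hQ : ∀ m : ℕ, ∃ qq : ℚ, ((qq:ℝ) ∈ Ioo (0:ℝ) 1) ∧ |(qq:ℝ) - x| < 1/(m+1) := by
    intro m
    have hpos : (0:ℝ) < 1/(m+1) := by positivity
    obtain ⟨qq, hq1, hq2⟩ := exists_rat_btwn (show max (x - 1/(m+1)) 0 < x from
      max_lt (by linarith) hx.1)
    refine ⟨qq, ⟨lt_of_le_of_lt (le_max_right _ _) hq1, hq2.trans hx.2⟩, ?_⟩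
    have h3 : x - 1/(m+1) < (qq:ℝ) := lt_of_le_of_lt (le_max_left _ _) hq1
    rw [abs_of_neg (by linarith)]
    linarith
  choose q hq1 hq2 using hQ
  have hqx : Filter.Tendsto (fun m : ℕ => ((q m : ℝ))) Filter.atTop (𝓝 x) := by
    rw [tendsto_iff_dist_tendsto_zero]
    apply squeeze_zero (fun m => dist_nonneg) (fun m => le_of_lt ?_)
      tendsto_one_div_add_atTop_nhds_zero_nat
    rw [Real.dist_eq]
    exact hq2 m
  have hlim : Filter.Tendsto (fun m : ℕ => (((q m : ℝ)), y)) Filter.atTop (𝓝 (x, y)) :=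
    hqx.prodMk_nhds tendsto_const_nhds
  have hcont2 : ContinuousAt (fun z => ‖fderiv ℝ p z ((0:ℝ),(1:ℝ))‖) (x, y) :=
    hdfc.continuousAt (hS.mem_nhds ⟨hx, hy⟩)
  have h1 := hcont2.tendsto.comp hlim
  have he : (fun m : ℕ => ‖fderiv ℝ p ((q m : ℝ), y) ((0:ℝ),(1:ℝ))‖) = fun _ => (1:ℝ) :=
    funext fun m => hratB (q m) (hq1 m) y hy
  have h2 : Filter.Tendsto (fun m : ℕ => ‖fderiv ℝ p ((q m : ℝ), y) ((0:ℝ),(1:ℝ))‖)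
      Filter.atTop (𝓝 1) := by rw [he]; exact tendsto_const_nhds
  exact tendsto_nhds_unique h1 h2

private lemma horiz_norm_one (p : ℝ × ℝ → EuclideanSpace ℝ (Fin 2))
    (hsmooth : ContDiffOn ℝ 2 p (Ioo 0 1 ×ˢ Ioo 0 1))
    (hhoriz : ∀ r : ℚ, (r : ℝ) ∈ Icc (0:ℝ) 1 → ∀ a b : ℝ, 0 ≤ a → a ≤ b → b ≤ 1 →
      eVariationOn (fun x : ℝ => p (x, (r : ℝ))) (Icc a b) = ENNReal.ofReal (b - a)) :
    ∀ z ∈ Ioo (0:ℝ) 1 ×ˢ Ioo (0:ℝ) 1, ‖fderiv ℝ p z (1, 0)‖ = 1 := by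
  set S := Ioo (0:ℝ) 1 ×ˢ Ioo (0:ℝ) 1 with hSdef
  have hS : IsOpen S := sq01_open
  set P : ℝ × ℝ → EuclideanSpace ℝ (Fin 2) := fun z => p (z.2, z.1) with hP
  have hmaps : MapsTo (fun z : ℝ × ℝ => (z.2, z.1)) S S := fun z hz => ⟨hz.2, hz.1⟩
  have hsm' : ContDiffOn ℝ 2 P S :=
    hsmooth.comp ((contDiff_snd.prodMk contDiff_fst).contDiffOn) hmaps
  have hv' : ∀ r : ℚ, (r : ℝ) ∈ Icc (0:ℝ) 1 → ∀ a b : ℝ, 0 ≤ a → a ≤ b → b ≤ 1 →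
      eVariationOn (fun y : ℝ => P ((r : ℝ), y)) (Icc a b) = ENNReal.ofReal (b - a) :=
    fun r hr a b ha hab hb => hhoriz r hr a b ha hab hb
  have key := vert_norm_one P hsm' hv'
  rintro ⟨x, y⟩ hz
  have hz' : ((y : ℝ), x) ∈ S := ⟨hz.2, hz.1⟩
  have h1 := key (y, x) hz'
  -- fderiv P (y,x) (0,1) = fderiv p (x,y) (1,0)
  have hp : HasFDerivAt p (fderiv ℝ p (x, y)) (x, y) :=
    ((hsmooth.contDiffAt (hS.mem_nhds hz)).differentiableAt (by norm_num)).hasFDerivAt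
  set σL : ℝ × ℝ →L[ℝ] ℝ × ℝ := (ContinuousLinearMap.snd ℝ ℝ ℝ).prod (ContinuousLinearMap.fst ℝ ℝ ℝ) with hσ
  have hPd : HasFDerivAt P ((fderiv ℝ p (x, y)).comp σL) (y, x) :=
    HasFDerivAt.comp (y, x) hp (σL.hasFDerivAt)
  rw [hPd.fderiv] at h1
  simpa [hσ] using h1

private lemma mixed_zero (p : ℝ × ℝ → EuclideanSpace ℝ (Fin 2))
    (hsmooth : ContDiffOn ℝ 2 p (Ioo 0 1 ×ˢ Ioo 0 1))
    (hnoncol : ∀ z ∈ Ioo (0:ℝ) 1 ×ˢ Ioo (0:ℝ) 1, ∀ c : ℝ,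
      fderiv ℝ p z (1, 0) ≠ c • fderiv ℝ p z (0, 1) ∧
      fderiv ℝ p z (0, 1) ≠ c • fderiv ℝ p z (1, 0))
    (hv : ∀ z ∈ Ioo (0:ℝ) 1 ×ˢ Ioo (0:ℝ) 1, ‖fderiv ℝ p z (0, 1)‖ = 1)
    (hh : ∀ z ∈ Ioo (0:ℝ) 1 ×ˢ Ioo (0:ℝ) 1, ‖fderiv ℝ p z (1, 0)‖ = 1) :
    ∀ z ∈ Ioo (0:ℝ) 1 ×ˢ Ioo (0:ℝ) 1, fderiv ℝ (fderiv ℝ p) z (1, 0) (0, 1) = 0 := by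
  set S := Ioo (0:ℝ) 1 ×ˢ Ioo (0:ℝ) 1 with hSdef
  have hS : IsOpen S := sq01_open
  have hd1 : ContDiffOn ℝ 1 (fderiv ℝ p) S := hsmooth.fderiv_of_isOpen hS (by norm_num)
  have hdiff2 : ∀ w ∈ S, HasFDerivAt (fderiv ℝ p) (fderiv ℝ (fderiv ℝ p) w) w := fun w hw =>
    ((hd1.contDiffAt (hS.mem_nhds hw)).differentiableAt one_ne_zero).hasFDerivAt
  rintro ⟨x, y⟩ hz
  obtain ⟨hx, hy⟩ := hz
  have hz : ((x:ℝ), y) ∈ S := ⟨hx, hy⟩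
  set D : (EuclideanSpace ℝ (Fin 2)) := fderiv ℝ (fderiv ℝ p) (x, y) (1, 0) (0, 1) with hD
  set Px : (EuclideanSpace ℝ (Fin 2)) := fderiv ℝ p (x, y) (1, 0) with hPx
  set Py : (EuclideanSpace ℝ (Fin 2)) := fderiv ℝ p (x, y) (0, 1) with hPy
  -- claim 1 : ⟪D, Py⟫ = 0
  have claim1 : (inner ℝ D Py : ℝ) = 0 := by
    set g : ℝ → (EuclideanSpace ℝ (Fin 2)) := fun t => fderiv ℝ p (t, y) (0, 1) with hg
    have hgd : ∀ t ∈ Ioo (0:ℝ) 1,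
        HasDerivAt g (fderiv ℝ (fderiv ℝ p) (t, y) (1, 0) (0, 1)) t := by
      intro t ht
      have hline : HasDerivAt (fun t : ℝ => (t, y)) (((1:ℝ), (0:ℝ))) t :=
        (hasDerivAt_id t).prodMk (hasDerivAt_const t y)
      have h2 := (hdiff2 (t, y) ⟨ht, hy⟩).comp_hasDerivAt t hline
      have h3 := ((ContinuousLinearMap.apply ℝ (EuclideanSpace ℝ (Fin 2))
        ((((0:ℝ), (1:ℝ))) : ℝ × ℝ)).hasFDerivAt).comp_hasDerivAt t h2
      exact h3
    have hinner := (HasDerivAt.inner ℝ (hgd x hx) (hgd x hx))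
    have hconst : (fun t => (inner ℝ (g t) (g t) : ℝ)) =ᶠ[𝓝 x] fun _ => (1:ℝ) := by
      filter_upwards [Ioo_mem_nhds hx.1 hx.2] with t ht
      rw [real_inner_self_eq_norm_sq, hv (t, y) ⟨ht, hy⟩, one_pow]
    have hzero : HasDerivAt (fun t => (inner ℝ (g t) (g t) : ℝ)) 0 x :=
      (hasDerivAt_const x (1:ℝ)).congr_of_eventuallyEq hconst
    have := hinner.unique hzero
    have hcomm : (inner ℝ (g x) D : ℝ) = inner ℝ D (g x) := real_inner_comm _ _
    have hgx : g x = Py := rfl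
    rw [hgx] at this hcomm
    rw [hcomm] at this
    have : (2:ℝ) * inner ℝ D Py = 0 := by rw [hD]; linarith [this]
    linarith [this]
  -- claim 2 : ⟪C, Px⟫ = 0 where C is the other mixed partial
  have claim2 : (inner ℝ (fderiv ℝ (fderiv ℝ p) (x, y) (0, 1) (1, 0)) Px : ℝ) = 0 := by
    set C : (EuclideanSpace ℝ (Fin 2)) := fderiv ℝ (fderiv ℝ p) (x, y) (0, 1) (1, 0) with hC
    set g : ℝ → (EuclideanSpace ℝ (Fin 2)) := fun t => fderiv ℝ p (x, t) (1, 0) with hg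
    have hgd : ∀ t ∈ Ioo (0:ℝ) 1,
        HasDerivAt g (fderiv ℝ (fderiv ℝ p) (x, t) (0, 1) (1, 0)) t := by
      intro t ht
      have hline : HasDerivAt (fun t : ℝ => (x, t)) (((0:ℝ), (1:ℝ))) t :=
        (hasDerivAt_const t x).prodMk (hasDerivAt_id t)
      have h2 := (hdiff2 (x, t) ⟨hx, ht⟩).comp_hasDerivAt t hline
      exact ((ContinuousLinearMap.apply ℝ (EuclideanSpace ℝ (Fin 2)) (((1:ℝ), (0:ℝ)))).hasFDerivAt).comp_hasDerivAt t h2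
    have hinner := (HasDerivAt.inner ℝ (hgd y hy) (hgd y hy))
    have hconst : (fun t => (inner ℝ (g t) (g t) : ℝ)) =ᶠ[𝓝 y] fun _ => (1:ℝ) := by
      filter_upwards [Ioo_mem_nhds hy.1 hy.2] with t ht
      rw [real_inner_self_eq_norm_sq, hh (x, t) ⟨hx, ht⟩, one_pow]
    have hzero : HasDerivAt (fun t => (inner ℝ (g t) (g t) : ℝ)) 0 y :=
      (hasDerivAt_const y (1:ℝ)).congr_of_eventuallyEq hconst
    have := hinner.unique hzero
    have hcomm : (inner ℝ (g y) C : ℝ) = inner ℝ C (g y) := real_inner_comm _ _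
    have hgy : g y = Px := rfl
    rw [hgy] at this hcomm
    rw [hcomm] at this
    have h2 : (2:ℝ) * inner ℝ C Px = 0 := by linarith [this]
    linarith [h2]
  have hsymm := (hsmooth.contDiffAt (hS.mem_nhds hz)).isSymmSndFDerivAt (by simp [minSmoothness_of_isRCLikeNormedField])
  have hCD : fderiv ℝ (fderiv ℝ p) (x, y) (0, 1) (1, 0) = D := (hsymm (0, 1) (1, 0)).trans rfl
  rw [hCD] at claim2
  -- independence and conclusion
  have hPx0 : Px ≠ 0 := by
    have := (hnoncol (x, y) hz 0).1
    simpa [hPx, hPy] using this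
  have hli : LinearIndependent ℝ ![Px, Py] := by
    rw [LinearIndependent.pair_iff' hPx0]
    intro a ha
    exact (hnoncol (x, y) hz a).2 ha.symm
  have hsp : Submodule.span ℝ (range ![Px, Py]) = ⊤ :=
    hli.span_eq_top_of_card_eq_finrank (by simp [finrank_euclideanSpace_fin])
  have hrange : range ![Px, Py] ⊆ {Px, Py} := by
    rw [range_subset_iff]
    intro i
    fin_cases i <;> simp
  have hmem : D ∈ Submodule.span ℝ ({Px, Py} : Set (EuclideanSpace ℝ (Fin 2))) := by
    have : Submodule.span ℝ ({Px, Py} : Set (EuclideanSpace ℝ (Fin 2))) = ⊤ :=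
      top_le_iff.1 (hsp ▸ Submodule.span_mono hrange)
    rw [this]; trivial
  obtain ⟨a, b, hab⟩ := Submodule.mem_span_pair.1 hmem
  have hDD : (inner ℝ D D : ℝ) = 0 := by
    have h4 : (inner ℝ D D : ℝ) = a * inner ℝ D Px + b * inner ℝ D Py := by
      nth_rewrite 2 [← hab]
      rw [inner_add_right, real_inner_smul_right, real_inner_smul_right]
    rw [h4, claim1, claim2]
    ring
  exact inner_self_eq_zero.1 hDD


/-- If `p : [0,1]² → ℝ²` is continuous, `C²` on the open square, preserves arc length
along all rational vertical and horizontal segments, and its partial derivative vectors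
are nowhere collinear on the open square, then `p` has laminar form
`p(x,y) = α₁(x) + α₂(y)`. -/
theorem stmt_8 (p : ℝ × ℝ → EuclideanSpace ℝ (Fin 2))
    (hcont : ContinuousOn p (Icc 0 1 ×ˢ Icc 0 1))
    (hsmooth : ContDiffOn ℝ 2 p (Ioo 0 1 ×ˢ Ioo 0 1))
    (hvert : ∀ r : ℚ, (r : ℝ) ∈ Icc (0:ℝ) 1 → ∀ a b : ℝ, 0 ≤ a → a ≤ b → b ≤ 1 →
      eVariationOn (fun y : ℝ => p ((r : ℝ), y)) (Icc a b) = ENNReal.ofReal (b - a))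
    (hhoriz : ∀ r : ℚ, (r : ℝ) ∈ Icc (0:ℝ) 1 → ∀ a b : ℝ, 0 ≤ a → a ≤ b → b ≤ 1 →
      eVariationOn (fun x : ℝ => p (x, (r : ℝ))) (Icc a b) = ENNReal.ofReal (b - a))
    (hnoncol : ∀ z ∈ Ioo (0:ℝ) 1 ×ˢ Ioo (0:ℝ) 1, ∀ c : ℝ,
      fderiv ℝ p z (1, 0) ≠ c • fderiv ℝ p z (0, 1) ∧
      fderiv ℝ p z (0, 1) ≠ c • fderiv ℝ p z (1, 0)) :
    ∃ α₁ α₂ : ℝ → EuclideanSpace ℝ (Fin 2),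
      ∀ x ∈ Icc (0:ℝ) 1, ∀ y ∈ Icc (0:ℝ) 1, p (x, y) = α₁ x + α₂ y := by
  set S := Ioo (0:ℝ) 1 ×ˢ Ioo (0:ℝ) 1 with hSdef
  have hS : IsOpen S := sq01_open
  have hv := vert_norm_one p hsmooth hvert
  have hh := horiz_norm_one p hsmooth hhoriz
  have hmix := mixed_zero p hsmooth hnoncol hv hh
  have hd1 : ContDiffOn ℝ 1 (fderiv ℝ p) S := hsmooth.fderiv_of_isOpen hS (by norm_num)
  have hdiff2 : ∀ w ∈ S, HasFDerivAt (fderiv ℝ p) (fderiv ℝ (fderiv ℝ p) w) w := fun w hw =>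
    ((hd1.contDiffAt (hS.mem_nhds hw)).differentiableAt one_ne_zero).hasFDerivAt
  have hder : ∀ z ∈ S, HasDerivAt (fun t => p (z.1, t)) (fderiv ℝ p z (0, 1)) z.2 := by
    rintro ⟨x, y⟩ hz
    have hp : HasFDerivAt p (fderiv ℝ p (x, y)) (x, y) :=
      ((hsmooth.contDiffAt (hS.mem_nhds hz)).differentiableAt (by norm_num)).hasFDerivAt
    have hline : HasDerivAt (fun t : ℝ => ((x : ℝ), t)) (((0:ℝ), (1:ℝ))) y :=
      (hasDerivAt_const y x).prodMk (hasDerivAt_id y)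
    exact hp.comp_hasDerivAt y hline
  -- the vertical partial derivative does not depend on x
  have hPyconst : ∀ y ∈ Ioo (0:ℝ) 1, ∀ x ∈ Ioo (0:ℝ) 1, ∀ x' ∈ Ioo (0:ℝ) 1,
      fderiv ℝ p (x, y) (0, 1) = fderiv ℝ p (x', y) (0, 1) := by
    intro y hy x hx x' hx'
    set f : ℝ → EuclideanSpace ℝ (Fin 2) := fun t => fderiv ℝ p (t, y) (0, 1) with hf
    have hfd : ∀ t ∈ Ioo (0:ℝ) 1, HasDerivAt f 0 t := by
      intro t ht
      have hline : HasDerivAt (fun t : ℝ => (t, y)) (((1:ℝ), (0:ℝ))) t :=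
        (hasDerivAt_id t).prodMk (hasDerivAt_const t y)
      have h2 := (hdiff2 (t, y) ⟨ht, hy⟩).comp_hasDerivAt t hline
      have h3 := ((ContinuousLinearMap.apply ℝ (EuclideanSpace ℝ (Fin 2))
        ((((0:ℝ), (1:ℝ))) : ℝ × ℝ)).hasFDerivAt).comp_hasDerivAt t h2
      have h4 : HasDerivAt f (fderiv ℝ (fderiv ℝ p) (t, y) (1, 0) (0, 1)) t := by
        exact h3
      rw [hmix (t, y) ⟨ht, hy⟩] at h4
      exact h4
    have := Convex.norm_image_sub_le_of_norm_hasDerivWithin_le (C := 0)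
      (f := f) (f' := fun _ => (0 : EuclideanSpace ℝ (Fin 2))) (s := Ioo (0:ℝ) 1)
      (fun t ht => (hfd t ht).hasDerivWithinAt) (fun t _ => by simp) (convex_Ioo 0 1) hx hx'
    have h5 : ‖f x' - f x‖ ≤ 0 := by simpa using this
    have h6 : f x' = f x := by
      have := norm_sub_eq_zero_iff.1 (le_antisymm h5 (norm_nonneg _))
      exact this
    exact h6.symm
  -- p (x,y) - p (1/2, y) is independent of y
  have h12 : (1/2 : ℝ) ∈ Ioo (0:ℝ) 1 := by norm_num
  have hconst2 : ∀ x ∈ Ioo (0:ℝ) 1, ∀ y ∈ Ioo (0:ℝ) 1,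
      p (x, y) - p (1/2, y) = p (x, 1/2) - p (1/2, 1/2) := by
    intro x hx y hy
    set g : ℝ → EuclideanSpace ℝ (Fin 2) := fun t => p (x, t) - p (1/2, t) with hg
    have hgd : ∀ t ∈ Ioo (0:ℝ) 1, HasDerivAt g 0 t := by
      intro t ht
      have h1 := (hder (x, t) ⟨hx, ht⟩).sub (hder ((1:ℝ)/2, t) ⟨h12, ht⟩)
      have h2 : fderiv ℝ p (x, t) (0, 1) - fderiv ℝ p (1/2, t) (0, 1) = 0 := by
        rw [hPyconst t ht x hx (1/2) h12]; simp
      rw [h2] at h1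
      exact h1
    have := Convex.norm_image_sub_le_of_norm_hasDerivWithin_le (C := 0)
      (f := g) (f' := fun _ => (0 : EuclideanSpace ℝ (Fin 2))) (s := Ioo (0:ℝ) 1)
      (fun t ht => (hgd t ht).hasDerivWithinAt) (fun t _ => by simp) (convex_Ioo 0 1) hy h12
    have h5 : ‖g (1/2) - g y‖ ≤ 0 := by simpa using this
    have h6 : g (1/2) = g y := norm_sub_eq_zero_iff.1 (le_antisymm h5 (norm_nonneg _))
    exact h6.symm
  -- conclusion
  refine ⟨fun x => p (x, 1/2) - p (1/2, 1/2), fun y => p (1/2, y), ?_⟩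
  intro x hx y hy
  set F : ℝ × ℝ → EuclideanSpace ℝ (Fin 2) :=
    fun z => p z - (p (z.1, 1/2) - p (1/2, 1/2) + p (1/2, z.2)) with hF
  have h12' : (1/2 : ℝ) ∈ Icc (0:ℝ) 1 := by norm_num
  have hFc : ContinuousOn F (Icc 0 1 ×ˢ Icc 0 1) := by
    have c1 : ContinuousOn (fun z : ℝ × ℝ => p (z.1, 1/2)) (Icc 0 1 ×ˢ Icc 0 1) :=
      hcont.comp ((continuous_fst.prodMk continuous_const).continuousOn)
        (fun z hz => ⟨hz.1, h12'⟩)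
    have c2 : ContinuousOn (fun z : ℝ × ℝ => p (1/2, z.2)) (Icc 0 1 ×ˢ Icc 0 1) :=
      hcont.comp ((continuous_const.prodMk continuous_snd).continuousOn)
        (fun z hz => ⟨h12', hz.2⟩)
    exact hcont.sub ((c1.sub continuousOn_const).add c2)
  have hF0 : ∀ z ∈ S, F z = 0 := by
    rintro ⟨a, b⟩ hz
    have := hconst2 a hz.1 b hz.2
    have h7 : p (a, b) = p (a, 1/2) - p (1/2, 1/2) + p (1/2, b) := by
      rw [← this]
      abel
    simp only [hF]
    rw [sub_eq_zero]
    exact h7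
  have hclos : (x, y) ∈ closure S := by
    rw [hSdef, closure_prod_eq, closure_Ioo (by norm_num : (0:ℝ) ≠ 1)]
    exact ⟨hx, hy⟩
  have hne : (𝓝[S] (x, y)).NeBot := mem_closure_iff_nhdsWithin_neBot.1 hclos
  have hsub : S ⊆ Icc 0 1 ×ˢ Icc 0 1 :=
    prod_mono Ioo_subset_Icc_self Ioo_subset_Icc_self
  have ht1 : Tendsto F (𝓝[S] (x, y)) (𝓝 (F (x, y))) :=
    (hFc (x, y) ⟨hx, hy⟩).mono_left (nhdsWithin_mono _ hsub)
  have ht2 : Tendsto F (𝓝[S] (x, y)) (𝓝 0) := by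
    refine Tendsto.congr' ?_ tendsto_const_nhds
    exact (eventually_nhdsWithin_of_forall (fun z hz => (hF0 z hz).symm))
  have hFxy : F (x, y) = 0 := tendsto_nhds_unique ht1 ht2
  have := sub_eq_zero.1 hFxy
  exact this
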